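/- Let 0<m<1, let μ = u^{-1-m}du on (0,∞), and let ν be a probability distribution on (0,∞)×𝒳 of a pair (X,Y) with E X < ∞. Then the image of the product measure μ⊗ν under the map (u,x,y) ↦ (ux,y) equals (E X^m)·(μ ⊗ ν_m); in particular for Borel A⊆(0,∞) and measurable B⊆𝒳, (μ⊗ν){(u,x,y): ux∈A, y∈B} = E X^m · μ(A) · ν_m(B). -/

import Mathlib

open MeasureTheory Real
open scoped ENNReal

noncomputable section

/-- The intensity measure `u^{-1-m} du` on `(0,∞)`. -/
def pdIntensity (m : ℝ) : Measure ℝ :=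
  (volume.restrict (Set.Ioi (0 : ℝ))).withDensity fun u => ENNReal.ofReal (u ^ (-1 - m))

/-- The tilted law `ν_m` on `𝒳` of the second coordinate `Y` under the change of density
`X^m / E X^m`, for a law `ν` of a pair `(X, Y)` on `ℝ × 𝒳`; equivalently
`ν_m (B) = ∫ (x^m / E X^m) ν_x (B) dν₁(x)` where `ν_x` is the regular conditional
distribution of `Y` given `X = x` and `ν₁` the first marginal. -/
def tiltedLaw {𝒳 : Type*} [MeasurableSpace 𝒳] (ν : Measure (ℝ × 𝒳)) (m : ℝ) : Measure 𝒳 :=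
  (ν.withDensity fun p => ENNReal.ofReal (p.1 ^ m / ∫ q, q.1 ^ m ∂ν)).snd

instance pdIntensity.instSigmaFinite (m : ℝ) : SigmaFinite (pdIntensity m) := by
  unfold pdIntensity; infer_instance

lemma pdIntensity_apply (m : ℝ) {A : Set ℝ} (hA : MeasurableSet A) :
    pdIntensity m A
      = ∫⁻ v, (A ∩ Set.Ioi 0).indicator (fun v => ENNReal.ofReal (v ^ (-1 - m))) v := by
  rw [pdIntensity, withDensity_apply _ hA, Measure.restrict_restrict hA,
    lintegral_indicator (hA.inter measurableSet_Ioi)]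

lemma pdIntensity_scale (m : ℝ) {x : ℝ} (hx : 0 < x) {A : Set ℝ} (hA : MeasurableSet A) :
    pdIntensity m ((fun u => u * x) ⁻¹' A) = ENNReal.ofReal (x ^ m) * pdIntensity m A := by
  have hxne : x ≠ 0 := hx.ne'
  have hApre : MeasurableSet ((fun u : ℝ => u * x) ⁻¹' A) := (measurable_mul_const x) hA
  rw [pdIntensity_apply m hApre, pdIntensity_apply m hA]
  set G : ℝ → ℝ≥0∞ := (A ∩ Set.Ioi 0).indicator (fun v => ENNReal.ofReal (v ^ (-1 - m)))
    with hG
  have hGmeas : Measurable G := by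
    refine Measurable.indicator ?_ (hA.inter measurableSet_Ioi)
    fun_prop
  have key : ∀ u : ℝ,
      ((fun u : ℝ => u * x) ⁻¹' A ∩ Set.Ioi 0).indicator
          (fun v => ENNReal.ofReal (v ^ (-1 - m))) u
        = ENNReal.ofReal (x ^ m) * ENNReal.ofReal x * G (u * x) := by
    intro u
    by_cases hu : u ∈ (fun u : ℝ => u * x) ⁻¹' A ∩ Set.Ioi 0
    · have hu0 : (0 : ℝ) < u := hu.2
      have hux : u * x ∈ A ∩ Set.Ioi 0 := ⟨hu.1, mul_pos hu0 hx⟩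
      rw [Set.indicator_of_mem hu, hG, Set.indicator_of_mem hux,
        ← ENNReal.ofReal_mul (by positivity), ← ENNReal.ofReal_mul (by positivity)]
      congr 1
      rw [Real.mul_rpow hu0.le hx.le]
      have h1 : x ^ m * x * (u ^ (-1 - m) * x ^ (-1 - m))
          = (x ^ m * x ^ (-1 - m) * x) * u ^ (-1 - m) := by ring
      rw [h1, ← Real.rpow_add hx]
      have h2 : m + (-1 - m) = -1 := by ring
      rw [h2, Real.rpow_neg_one]
      field_simp
    · have hux : u * x ∉ A ∩ Set.Ioi 0 := by
        intro h
        refine hu ⟨h.1, ?_⟩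
        have h2 := h.2
        simp only [Set.mem_Ioi] at h2 ⊢
        by_contra hcon
        push_neg at hcon
        nlinarith
      rw [Set.indicator_of_notMem hu, hG, Set.indicator_of_notMem hux, mul_zero]
  simp_rw [key]
  rw [lintegral_const_mul' _ _ (ENNReal.mul_ne_top ENNReal.ofReal_ne_top ENNReal.ofReal_ne_top)]
  have hchg : ∫⁻ u, G (u * x) = ENNReal.ofReal |x⁻¹| * ∫⁻ v, G v := by
    rw [← lintegral_map hGmeas (measurable_mul_const x), Real.map_volume_mul_right hxne,
      lintegral_smul_measure, smul_eq_mul]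
  rw [hchg, abs_of_pos (inv_pos.mpr hx), mul_assoc, ← mul_assoc (ENNReal.ofReal x),
    ← ENNReal.ofReal_mul hx.le, mul_inv_cancel₀ hxne, ENNReal.ofReal_one, one_mul]

/-- Let `0 < m < 1`, `μ = u^{-1-m} du` on `(0,∞)`, and `ν` a probability distribution on
`(0,∞) × 𝒳` of a pair `(X,Y)` with `E X < ∞`. Then the image of `μ ⊗ ν` under
`(u, x, y) ↦ (u * x, y)` equals `(E X^m) • (μ ⊗ ν_m)`; in particular, for Borel
`A ⊆ (0,∞)` and measurable `B ⊆ 𝒳`,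
`(μ ⊗ ν) {(u,x,y) : u * x ∈ A, y ∈ B} = E X^m * μ(A) * ν_m(B)`. -/
theorem map_mul_prod_tilted {𝒳 : Type*} [MeasurableSpace 𝒳]
    [TopologicalSpace 𝒳] [PolishSpace 𝒳] [BorelSpace 𝒳]
    (m : ℝ) (hm0 : 0 < m) (hm1 : m < 1)
    (ν : Measure (ℝ × 𝒳)) [IsProbabilityMeasure ν]
    (hpos : ν {p | p.1 ≤ 0} = 0)
    (hint : Integrable (fun p : ℝ × 𝒳 => p.1) ν) :
    Measure.map (fun p : ℝ × (ℝ × 𝒳) => (p.1 * p.2.1, p.2.2)) ((pdIntensity m).prod ν)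
        = ENNReal.ofReal (∫ p, p.1 ^ m ∂ν) • ((pdIntensity m).prod (tiltedLaw ν m)) ∧
      ∀ (A : Set ℝ) (B : Set 𝒳), MeasurableSet A → A ⊆ Set.Ioi (0 : ℝ) → MeasurableSet B →
        ((pdIntensity m).prod ν) {p : ℝ × (ℝ × 𝒳) | p.1 * p.2.1 ∈ A ∧ p.2.2 ∈ B}
          = ENNReal.ofReal (∫ p, p.1 ^ m ∂ν) * pdIntensity m A * tiltedLaw ν m B := by
  have hT : Measurable (fun p : ℝ × (ℝ × 𝒳) => (p.1 * p.2.1, p.2.2)) :=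
    (measurable_fst.mul measurable_snd.fst).prodMk measurable_snd.snd
  set c := ∫ p, p.1 ^ m ∂ν with hc
  have hae : ∀ᵐ q ∂ν, 0 < q.1 := by
    rw [ae_iff]
    convert hpos using 2
    ext p
    simp [not_lt]
  have hmx : Measurable fun p : ℝ × 𝒳 => p.1 ^ m := by fun_prop
  have hint_xm : Integrable (fun p : ℝ × 𝒳 => p.1 ^ m) ν := by
    refine Integrable.mono (g := fun p : ℝ × 𝒳 => 1 + |p.1|)
      ((integrable_const 1).add hint.abs) hmx.aestronglyMeasurable ?_
    filter_upwards [hae] with q hq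
    have h1 : (0 : ℝ) < q.1 ^ m := Real.rpow_pos_of_pos hq m
    rw [Real.norm_eq_abs, Real.norm_eq_abs, abs_of_pos h1,
      abs_of_pos (by positivity : (0:ℝ) < 1 + |q.1|)]
    rcases le_total q.1 1 with h | h
    · have h2 := Real.rpow_le_one hq.le h hm0.le
      linarith [abs_nonneg q.1]
    · have h2 : q.1 ^ m ≤ q.1 ^ (1 : ℝ) :=
        Real.rpow_le_rpow_of_exponent_le h hm1.le
      rw [Real.rpow_one] at h2
      have := abs_of_pos hq
      linarith
  have hc_pos : 0 < c := by
    rw [hc, integral_pos_iff_support_of_nonneg_ae ?_ hint_xm]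
    · have hnull : ν (Function.support fun p : ℝ × 𝒳 => p.1 ^ m)ᶜ = 0 := by
        refine measure_mono_null ?_ hpos
        intro p hp
        simp only [Set.mem_compl_iff, Function.mem_support, not_not] at hp
        simp only [Set.mem_setOf_eq]
        by_contra h
        push_neg at h
        exact (Real.rpow_pos_of_pos h m).ne' hp
      by_contra h
      push_neg at h
      have h0 : ν (Function.support fun p : ℝ × 𝒳 => p.1 ^ m) = 0 := le_antisymm h zero_le
      have : ν Set.univ = 0 := by
        have := measure_union_le (μ := ν)
          (Function.support fun p : ℝ × 𝒳 => p.1 ^ m)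
          (Function.support fun p : ℝ × 𝒳 => p.1 ^ m)ᶜ
        rw [Set.union_compl_self, h0, hnull] at this
        simpa using this
      simp [measure_univ] at this
    · filter_upwards [hae] with q hq
      exact (Real.rpow_pos_of_pos hq m).le
  have hcne0 : c ≠ 0 := hc_pos.ne'
  have hf : Measurable fun p : ℝ × 𝒳 => ENNReal.ofReal (p.1 ^ m / c) :=
    (hmx.div_const c).ennreal_ofReal
  haveI : SFinite (tiltedLaw ν m) := by unfold tiltedLaw; infer_instance
  have hmain : Measure.map (fun p : ℝ × (ℝ × 𝒳) => (p.1 * p.2.1, p.2.2)) ((pdIntensity m).prod ν)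
      = ENNReal.ofReal c • ((pdIntensity m).prod (tiltedLaw ν m)) := by
    ext s hs
    have hg : Measurable fun y : 𝒳 => pdIntensity m ((fun u : ℝ => (u, y)) ⁻¹' s) :=
      measurable_measure_prodMk_right hs
    have e2 : ∫⁻ y, pdIntensity m ((fun u : ℝ => (u, y)) ⁻¹' s) ∂(tiltedLaw ν m)
        = ∫⁻ q, pdIntensity m ((fun u : ℝ => (u, q.2)) ⁻¹' s)
            ∂(ν.withDensity fun p => ENNReal.ofReal (p.1 ^ m / c)) := by
      rw [tiltedLaw, ← hc, Measure.snd]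
      exact lintegral_map hg measurable_snd
    have e3 : ∫⁻ q, pdIntensity m ((fun u : ℝ => (u, q.2)) ⁻¹' s)
            ∂(ν.withDensity fun p => ENNReal.ofReal (p.1 ^ m / c))
        = ∫⁻ q, ENNReal.ofReal (q.1 ^ m / c)
            * pdIntensity m ((fun u : ℝ => (u, q.2)) ⁻¹' s) ∂ν :=
      lintegral_withDensity_eq_lintegral_mul _ hf (hg.comp measurable_snd)
    rw [Measure.map_apply hT hs, Measure.smul_apply, smul_eq_mul,
      Measure.prod_apply_symm (hT hs), Measure.prod_apply_symm hs, e2, e3,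
      ← lintegral_const_mul' _ _ ENNReal.ofReal_ne_top]
    refine lintegral_congr_ae ?_
    filter_upwards [hae] with q hq
    have hset : ((fun u : ℝ => (u, q)) ⁻¹' ((fun p : ℝ × (ℝ × 𝒳) => (p.1 * p.2.1, p.2.2)) ⁻¹' s))
        = (fun u : ℝ => u * q.1) ⁻¹' ((fun u : ℝ => (u, q.2)) ⁻¹' s) := rfl
    rw [hset, pdIntensity_scale m hq (measurable_prodMk_right hs),
      ← mul_assoc, ← ENNReal.ofReal_mul hc_pos.le, mul_comm c _, div_mul_cancel₀ _ hcne0]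
  refine ⟨hmain, fun A B hA hA0 hB => ?_⟩
  have hset : {p : ℝ × (ℝ × 𝒳) | p.1 * p.2.1 ∈ A ∧ p.2.2 ∈ B}
      = (fun p : ℝ × (ℝ × 𝒳) => (p.1 * p.2.1, p.2.2)) ⁻¹' (A ×ˢ B) := rfl
  rw [hset, ← Measure.map_apply hT (hA.prod hB), hmain, Measure.smul_apply, smul_eq_mul,
    Measure.prod_prod, mul_assoc]

end
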